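/- arXiv:2009.11548 — 3 statements merged into one kernel-verified Lean document; each statement's English description precedes it below -/
import Mathlib

section
/- For every real λ > 1, the function value λ·(1 - exp(-(ln λ)/(λ-1))) is at least 1 - e⁻¹; equivalently, 1 - exp(-(ln λ)/(λ-1)) ≥ (1 - e⁻¹)/λ. -/
theorem stmt_3 (l : ℝ) (h : 1 < l) :
    1 - Real.exp (-1) ≤ l * (1 - Real.exp (-(Real.log l) / (l - 1))) ∧
    (1 - Real.exp (-1)) / l ≤ 1 - Real.exp (-(Real.log l) / (l - 1)) := by
  have hl0 : 0 < l := lt_trans one_pos h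
  have hl1 : 0 < l - 1 := by linarith
  have hlog : 0 < Real.log l := Real.log_pos h
  set t : ℝ := Real.log l / (l - 1) with ht
  have ht0 : 0 < t := div_pos hlog hl1
  have ht1 : t ≤ 1 := by
    rw [ht, div_le_one hl1]
    exact le_of_lt (Real.log_lt_sub_one_of_pos hl0 (ne_of_gt h))
  have hconv : Real.exp (-t) ≤ (1 - t) * 1 + t * Real.exp (-1) := by
    have := convexOn_exp.2 (Set.mem_univ (0:ℝ)) (Set.mem_univ (-1:ℝ))
      (by linarith : (0:ℝ) ≤ 1 - t) (le_of_lt ht0) (by ring)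
    simpa [smul_eq_mul, Real.exp_zero] using this
  have key : t * (1 - Real.exp (-1)) ≤ 1 - Real.exp (-t) := by nlinarith
  have hlog2 : 1 - 1/l ≤ Real.log l := by
    have := Real.log_le_sub_one_of_pos (show 0 < 1/l by positivity)
    rw [Real.log_div one_ne_zero (ne_of_gt hl0), Real.log_one] at this
    linarith
  have hlt : 1 ≤ l * t := by
    rw [ht, mul_div_assoc', le_div_iff₀ hl1]
    have h2 : (1 - 1/l) * l = l - 1 := by field_simp
    nlinarith
  have hexp1 : Real.exp (-1) < 1 := by
    rw [Real.exp_lt_one_iff]; norm_num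
  have hmain : 1 - Real.exp (-1) ≤ l * (1 - Real.exp (-t)) := by
    calc 1 - Real.exp (-1) ≤ l * t * (1 - Real.exp (-1)) := by nlinarith
    _ ≤ l * (1 - Real.exp (-t)) := by nlinarith
  have heq : -Real.log l / (l - 1) = -t := by rw [ht]; ring
  refine ⟨by rw [heq]; exact hmain, ?_⟩
  rw [div_le_iff₀ hl0, heq]
  linarith [hmain]
end

section
/- Let A and B be n×n Hermitian matrices over ℂ, with eigenvalues listed in decreasing order σ₁ ≥ ... ≥ σₙ. Then for every i, |σᵢ(A+B) − σᵢ(A)| ≤ ‖B‖_F, where ‖·‖_F is the Frobenius norm. -/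
open Matrix Finset Submodule

noncomputable section WeylAux

variable {n : ℕ}

local notation "E" => EuclideanSpace ℂ (Fin n)

/-- Rayleigh upper bound on a span of eigenvectors. -/
lemma rayleigh_le {T : E →ₗ[ℂ] E}
    (v : OrthonormalBasis (Fin n) ℂ E) (μ : Fin n → ℝ)
    (hv : ∀ j, T (v j) = ((μ j : ℝ) : ℂ) • v j)
    {ι : Type} [Fintype ι] (e : ι → Fin n) (c : ℝ) (hc : ∀ k, μ (e k) ≤ c)
    {x : E} (hx : x ∈ Submodule.span ℂ (Set.range fun k => v (e k))) :
    Complex.re (inner (𝕜 := ℂ) x (T x)) ≤ c * ‖x‖ ^ 2 := by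
  classical
  set a : Fin n → ℂ := fun j => inner (𝕜 := ℂ) (v j) x with ha
  have h0 : ∀ j, (∀ k, e k ≠ j) → a j = 0 := by
    intro j hj
    have : ∀ y ∈ Submodule.span ℂ (Set.range fun k => v (e k)),
        inner (𝕜 := ℂ) (v j) y = 0 := by
      intro y hy
      induction hy using Submodule.span_induction with
      | mem y hy =>
        obtain ⟨k, rfl⟩ := hy
        exact v.orthonormal.2 (by simpa using (hj k).symm)
      | zero => simp
      | add y z _ _ hy hz => simp [inner_add_right, hy, hz]
      | smul c y _ hy => simp [inner_smul_right, hy]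
    exact this x hx
  have hx' : x = ∑ j, a j • v j := by
    simpa [ha] using (v.sum_repr' x).symm
  have hTx : T x = ∑ j, (a j * ((μ j : ℝ) : ℂ)) • v j := by
    conv_lhs => rw [hx']
    rw [map_sum]
    refine Finset.sum_congr rfl fun j _ => ?_
    rw [LinearMap.map_smul, hv j, smul_smul]
  have hinner : inner (𝕜 := ℂ) x (T x)
      = ∑ j, (starRingEnd ℂ) (a j) * (a j * ((μ j : ℝ) : ℂ)) := by
    conv_lhs => rw [hTx, hx']
    exact v.orthonormal.inner_sum a (fun j => a j * ((μ j : ℝ) : ℂ)) Finset.univ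
  have hterm : ∀ j, (starRingEnd ℂ) (a j) * (a j * ((μ j : ℝ) : ℂ))
      = (((‖a j‖ ^ 2 * μ j : ℝ)) : ℂ) := by
    intro j
    rw [← mul_assoc, RCLike.conj_mul]
    push_cast
    ring_nf
    try exact mul_comm _ _
  have hre : Complex.re (inner (𝕜 := ℂ) x (T x)) = ∑ j, ‖a j‖ ^ 2 * μ j := by
    rw [hinner]
    simp only [hterm]
    rw [← Complex.ofReal_sum]
    exact Complex.ofReal_re _
  have hnorm : ‖x‖ ^ 2 = ∑ j, ‖a j‖ ^ 2 := by
    have h1 : ‖x‖ = ‖v.repr x‖ := (v.repr.norm_map x).symm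
    rw [h1, EuclideanSpace.norm_eq, Real.sq_sqrt (by positivity)]
    refine Finset.sum_congr rfl fun j _ => ?_
    rw [v.repr_apply_apply]
  rw [hre, hnorm, Finset.mul_sum]
  refine Finset.sum_le_sum fun j _ => ?_
  by_cases hj : ∃ k, e k = j
  · obtain ⟨k, rfl⟩ := hj
    have := hc k
    nlinarith [sq_nonneg ‖a (e k)‖]
  · rw [h0 j (fun k hk => hj ⟨k, hk⟩)]
    simp [mul_comm]

/-- Rayleigh lower bound on a span of eigenvectors. -/
lemma rayleigh_ge {T : E →ₗ[ℂ] E}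
    (v : OrthonormalBasis (Fin n) ℂ E) (μ : Fin n → ℝ)
    (hv : ∀ j, T (v j) = ((μ j : ℝ) : ℂ) • v j)
    {ι : Type} [Fintype ι] (e : ι → Fin n) (c : ℝ) (hc : ∀ k, c ≤ μ (e k))
    {x : E} (hx : x ∈ Submodule.span ℂ (Set.range fun k => v (e k))) :
    c * ‖x‖ ^ 2 ≤ Complex.re (inner (𝕜 := ℂ) x (T x)) := by
  have := rayleigh_le (T := -T) v (fun j => -μ j)
    (fun j => by simp [hv j, neg_smul]) e (-c) (fun k => by simpa using neg_le_neg (hc k)) hx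
  have h2 : inner (𝕜 := ℂ) x ((-T) x) = -inner (𝕜 := ℂ) x (T x) := by
    simp [inner_neg_right]
  rw [h2] at this
  simp only [Complex.neg_re] at this
  linarith

/-- Frobenius bound on matrix-vector multiplication. -/
lemma mulVec_norm_le_frobenius (B : Matrix (Fin n) (Fin n) ℂ) (x : E) :
    ‖Matrix.toEuclideanLin B x‖ ≤ Real.sqrt (∑ i, ∑ j, ‖B i j‖ ^ 2) * ‖x‖ := by
  classical
  have hrow : ∀ i : Fin n, ‖(Matrix.toEuclideanLin B x) i‖ ^ 2
      ≤ (∑ j, ‖B i j‖ ^ 2) * ‖x‖ ^ 2 := by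
    intro i
    set a : E := (WithLp.equiv 2 (Fin n → ℂ)).symm (fun j => (starRingEnd ℂ) (B i j)) with hadef
    have hinner : inner (𝕜 := ℂ) a x = (Matrix.toEuclideanLin B x) i := by
      rw [PiLp.inner_apply]
      simp only [hadef]
      simp [Matrix.toEuclideanLin_apply, Matrix.mulVec, dotProduct, WithLp.equiv_symm_apply, PiLp.toLp_apply, mul_comm]
    have hcs : ‖inner (𝕜 := ℂ) a x‖ ≤ ‖a‖ * ‖x‖ := norm_inner_le_norm a x
    have hna : ‖a‖ ^ 2 = ∑ j, ‖B i j‖ ^ 2 := by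
      rw [EuclideanSpace.norm_eq, Real.sq_sqrt (by positivity)]
      refine Finset.sum_congr rfl fun j _ => ?_
      simp [hadef, WithLp.equiv_symm_apply, PiLp.toLp_apply]
    rw [← hinner]
    calc ‖inner (𝕜 := ℂ) a x‖ ^ 2 ≤ (‖a‖ * ‖x‖) ^ 2 := by
          have h0 : (0:ℝ) ≤ ‖inner (𝕜 := ℂ) a x‖ := norm_nonneg _
          nlinarith
      _ = (∑ j, ‖B i j‖ ^ 2) * ‖x‖ ^ 2 := by rw [mul_pow, hna]
  have hsq : ‖Matrix.toEuclideanLin B x‖ ^ 2 ≤ (∑ i, ∑ j, ‖B i j‖ ^ 2) * ‖x‖ ^ 2 := by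
    rw [EuclideanSpace.norm_eq, Real.sq_sqrt (by positivity), Finset.sum_mul]
    exact Finset.sum_le_sum fun i _ => hrow i
  have h1 : ‖Matrix.toEuclideanLin B x‖
      = Real.sqrt (‖Matrix.toEuclideanLin B x‖ ^ 2) := by
    rw [Real.sqrt_sq (norm_nonneg _)]
  rw [h1]
  calc Real.sqrt (‖Matrix.toEuclideanLin B x‖ ^ 2)
      ≤ Real.sqrt ((∑ i, ∑ j, ‖B i j‖ ^ 2) * ‖x‖ ^ 2) := Real.sqrt_le_sqrt hsq
    _ = Real.sqrt (∑ i, ∑ j, ‖B i j‖ ^ 2) * ‖x‖ := by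
        rw [Real.sqrt_mul (by positivity), Real.sqrt_sq (norm_nonneg _)]

lemma toEuclideanLin_eigenvector {M : Matrix (Fin n) (Fin n) ℂ} (hM : M.IsHermitian) (j : Fin n) :
    Matrix.toEuclideanLin M (hM.eigenvectorBasis j)
      = ((hM.eigenvalues j : ℝ) : ℂ) • hM.eigenvectorBasis j := by
  apply PiLp.ext
  intro k
  have h := congrFun (hM.mulVec_eigenvectorBasis j) k
  simpa [Matrix.toEuclideanLin_apply, WithLp.equiv_symm_apply, PiLp.toLp_apply,
    PiLp.smul_apply, Complex.real_smul, smul_eq_mul] using h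

/-- One-sided Weyl inequality with Frobenius bound. -/
lemma weyl_one_side {M N : Matrix (Fin n) (Fin n) ℂ}
    (hM : M.IsHermitian) (hN : N.IsHermitian)
    (σM σN : Fin n → ℝ) (gM gN : Equiv.Perm (Fin n))
    (hσM : σM = hM.eigenvalues ∘ gM) (hσN : σN = hN.eigenvalues ∘ gN)
    (hmM : Antitone σM) (hmN : Antitone σN) (i : Fin n) :
    σM i - σN i ≤ Real.sqrt (∑ a, ∑ b, ‖(M - N) a b‖ ^ 2) := by
  classical
  set F := Real.sqrt (∑ a, ∑ b, ‖(M - N) a b‖ ^ 2) with hF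
  have hFnonneg : 0 ≤ F := Real.sqrt_nonneg _
  have hi : (i : ℕ) < n := i.isLt
  -- eigenvector families
  set vM := hM.eigenvectorBasis with hvM
  set vN := hN.eigenvectorBasis with hvN
  -- index maps
  have hle : (i : ℕ) + 1 ≤ n := hi
  set eM : Fin ((i : ℕ) + 1) → Fin n := fun k => gM (Fin.castLE hle k) with heM
  set eN : Fin (n - (i : ℕ)) → Fin n :=
    fun k => gN ⟨(i : ℕ) + (k : ℕ), by omega⟩ with heN
  set U := Submodule.span ℂ (Set.range fun k => vM (eM k)) with hU
  set V := Submodule.span ℂ (Set.range fun k => vN (eN k)) with hV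
  -- dimensions
  have hUdim : Module.finrank ℂ U = (i : ℕ) + 1 := by
    rw [hU, finrank_span_eq_card]
    · simp
    · exact (vM.orthonormal.comp eM
        (gM.injective.comp (Fin.castLE_injective hle))).linearIndependent
  have hVdim : Module.finrank ℂ V = n - (i : ℕ) := by
    rw [hV, finrank_span_eq_card]
    · simp
    · refine (vN.orthonormal.comp eN ?_).linearIndependent
      intro a b hab
      have := gN.injective hab
      have : (i : ℕ) + (a : ℕ) = (i : ℕ) + (b : ℕ) := congrArg Fin.val this
      omega
  -- nontrivial intersection
  have hdim : 0 < Module.finrank ℂ ↥(U ⊓ V) := by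
    have hsum := Submodule.finrank_sup_add_finrank_inf_eq U V
    have hsup : Module.finrank ℂ ↥(U ⊔ V) ≤ n := by
      have := Submodule.finrank_le (U ⊔ V)
      simpa [finrank_euclideanSpace_fin] using this
    omega
  have hnontriv : Nontrivial ↥(U ⊓ V) := Module.finrank_pos_iff.mp hdim
  obtain ⟨⟨x, hxUV⟩, hxne⟩ := exists_ne (0 : ↥(U ⊓ V))
  have hx0 : x ≠ 0 := by
    intro h
    exact hxne (Subtype.ext h)
  have hxU : x ∈ U := hxUV.1
  have hxV : x ∈ V := hxUV.2
  have hxnorm : 0 < ‖x‖ ^ 2 := by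
    have hpos : 0 < ‖x‖ := norm_pos_iff.mpr hx0
    positivity
  -- Rayleigh bounds
  have hMev : ∀ j, Matrix.toEuclideanLin M (vM j)
      = ((hM.eigenvalues j : ℝ) : ℂ) • vM j := fun j => toEuclideanLin_eigenvector hM j
  have hNev : ∀ j, Matrix.toEuclideanLin N (vN j)
      = ((hN.eigenvalues j : ℝ) : ℂ) • vN j := fun j => toEuclideanLin_eigenvector hN j
  have hlower : σM i * ‖x‖ ^ 2
      ≤ Complex.re (inner (𝕜 := ℂ) x (Matrix.toEuclideanLin M x)) := by
    refine rayleigh_ge vM hM.eigenvalues hMev eM (σM i) ?_ hxU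
    intro k
    have hk : Fin.castLE hle k ≤ i := by
      have : (k : ℕ) ≤ (i : ℕ) := Nat.lt_succ_iff.mp k.isLt
      exact this
    have : σM i ≤ σM (Fin.castLE hle k) := hmM hk
    simpa [hσM, heM] using this
  have hupper : Complex.re (inner (𝕜 := ℂ) x (Matrix.toEuclideanLin N x))
      ≤ σN i * ‖x‖ ^ 2 := by
    refine rayleigh_le vN hN.eigenvalues hNev eN (σN i) ?_ hxV
    intro k
    have hk : i ≤ (⟨(i : ℕ) + (k : ℕ), by omega⟩ : Fin n) := by
      show (i : ℕ) ≤ (i : ℕ) + (k : ℕ)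
      omega
    have : σN ⟨(i : ℕ) + (k : ℕ), by omega⟩ ≤ σN i := hmN hk
    simpa [hσN, heN] using this
  -- Frobenius bound
  have hD : Complex.re (inner (𝕜 := ℂ) x (Matrix.toEuclideanLin (M - N) x))
      ≤ F * ‖x‖ ^ 2 := by
    have h1 : Complex.re (inner (𝕜 := ℂ) x (Matrix.toEuclideanLin (M - N) x))
        ≤ ‖inner (𝕜 := ℂ) x (Matrix.toEuclideanLin (M - N) x)‖ := Complex.re_le_norm _
    have h2 : ‖inner (𝕜 := ℂ) x (Matrix.toEuclideanLin (M - N) x)‖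
        ≤ ‖x‖ * ‖Matrix.toEuclideanLin (M - N) x‖ := norm_inner_le_norm _ _
    have h3 := mulVec_norm_le_frobenius (M - N) x
    have h4 : ‖x‖ * ‖Matrix.toEuclideanLin (M - N) x‖ ≤ ‖x‖ * (F * ‖x‖) :=
      mul_le_mul_of_nonneg_left h3 (norm_nonneg _)
    calc Complex.re (inner (𝕜 := ℂ) x (Matrix.toEuclideanLin (M - N) x))
        ≤ ‖x‖ * (F * ‖x‖) := le_trans h1 (le_trans h2 h4)
      _ = F * ‖x‖ ^ 2 := by ring
  -- combine
  have hsplit : Matrix.toEuclideanLin M x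
      = Matrix.toEuclideanLin N x + Matrix.toEuclideanLin (M - N) x := by
    rw [map_sub]
    simp
  have hre : Complex.re (inner (𝕜 := ℂ) x (Matrix.toEuclideanLin M x))
      = Complex.re (inner (𝕜 := ℂ) x (Matrix.toEuclideanLin N x))
        + Complex.re (inner (𝕜 := ℂ) x (Matrix.toEuclideanLin (M - N) x)) := by
    rw [hsplit, inner_add_right]
    exact Complex.add_re _ _
  have : σM i * ‖x‖ ^ 2 ≤ (σN i + F) * ‖x‖ ^ 2 := by
    rw [add_mul]
    calc σM i * ‖x‖ ^ 2 ≤ _ := hlower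
      _ = _ := hre
      _ ≤ σN i * ‖x‖ ^ 2 + F * ‖x‖ ^ 2 := add_le_add hupper hD
  have := (mul_le_mul_iff_of_pos_right hxnorm).mp this
  linarith

end WeylAux

theorem stmt_9 {n : ℕ} (A B : Matrix (Fin n) (Fin n) ℂ)
    (hA : A.IsHermitian) (hB : B.IsHermitian) (hAB : (A + B).IsHermitian)
    (σA σAB : Fin n → ℝ) (gA gAB : Equiv.Perm (Fin n))
    (hσA : σA = hA.eigenvalues ∘ gA) (hσAB : σAB = hAB.eigenvalues ∘ gAB)
    (hmonoA : Antitone σA) (hmonoAB : Antitone σAB) :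
    ∀ i, |σAB i - σA i| ≤ Real.sqrt (∑ i, ∑ j, ‖B i j‖ ^ 2) := by
  intro i
  have h1 : σAB i - σA i ≤ Real.sqrt (∑ a, ∑ b, ‖(A + B - A) a b‖ ^ 2) :=
    weyl_one_side hAB hA σAB σA gAB gA hσAB hσA hmonoAB hmonoA i
  have h2 : σA i - σAB i ≤ Real.sqrt (∑ a, ∑ b, ‖(A - (A + B)) a b‖ ^ 2) :=
    weyl_one_side hA hAB σA σAB gA gAB hσA hσAB hmonoA hmonoAB i
  have e1 : A + B - A = B := by abel
  have e2 : A - (A + B) = -B := by abel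
  rw [e1] at h1
  rw [e2] at h2
  simp only [Matrix.neg_apply, norm_neg] at h2
  rw [abs_sub_le_iff]
  exact ⟨h1, h2⟩
end

section
/- The function θ ↦ ρ·aᴴ(I_T + ρ·bbᴴ + ρθ·ccᴴ)⁻¹a is monotonically nonincreasing on θ ≥ 0, and the function θ ↦ ρθ·aᴴ(I_T + ρ·bbᴴ + ρθ·ccᴴ)⁻¹a is strictly increasing on θ ≥ 0, whenever a, b, c ∈ ℂ^T are distinct unit vectors and ρ > 0. -/
open scoped Matrix
open Matrix Complex

variable {T : ℕ}

lemma vmv_mul (u v u' v' : Fin T → ℂ) :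
    vecMulVec u v * vecMulVec u' v' = (v ⬝ᵥ u') • vecMulVec u v' := by
  ext i j
  simp [Matrix.mul_apply, vecMulVec_apply, dotProduct, Finset.sum_mul, Finset.mul_sum]
  congr 1; ext k; ring

lemma vmv_mulVec (u v x : Fin T → ℂ) :
    vecMulVec u v *ᵥ x = (v ⬝ᵥ x) • u := by
  ext i
  simp [Matrix.mulVec, vecMulVec_apply, dotProduct, Finset.sum_mul, Finset.mul_sum]
  congr 1; ext k; ring

lemma dot_conj (x y : Fin T → ℂ) : star y ⬝ᵥ x = (starRingEnd ℂ) (star x ⬝ᵥ y) := by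
  simp [dotProduct, map_sum]
  congr 1; ext k; ring

lemma dot_self_re (x : Fin T → ℂ) : star x ⬝ᵥ x = ((∑ i, ‖x i‖ ^ 2 : ℝ) : ℂ) := by
  push_cast
  simp [dotProduct]
  congr 1; ext k
  rw [Complex.normSq_eq_conj_mul_self.symm]
  norm_cast
  rw [Complex.normSq_eq_norm_sq]

lemma cs_key (x y : Fin T → ℂ) :
    Complex.normSq (star x ⬝ᵥ y) ≤ (∑ i, ‖x i‖ ^ 2) * (∑ i, ‖y i‖ ^ 2) := by
  set X : EuclideanSpace ℂ (Fin T) := (WithLp.equiv 2 (Fin T → ℂ)).symm x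
  set Y : EuclideanSpace ℂ (Fin T) := (WithLp.equiv 2 (Fin T → ℂ)).symm y
  have h1 : (inner ℂ X Y) = star x ⬝ᵥ y := by
    simp [PiLp.inner_apply, dotProduct, X, Y, RCLike.inner_apply, mul_comm]
  have h2 : ‖X‖ ^ 2 = ∑ i, ‖x i‖ ^ 2 := by
    rw [EuclideanSpace.norm_eq, Real.sq_sqrt (by positivity)]
    simp [X, WithLp.equiv_symm_apply, PiLp.toLp_apply]
  have h3 : ‖Y‖ ^ 2 = ∑ i, ‖y i‖ ^ 2 := by
    rw [EuclideanSpace.norm_eq, Real.sq_sqrt (by positivity)]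
    simp [Y, WithLp.equiv_symm_apply, PiLp.toLp_apply]
  have h := norm_inner_le_norm (𝕜 := ℂ) X Y
  have h4 : ‖(inner ℂ X Y)‖ ^ 2 ≤ (‖X‖ * ‖Y‖) ^ 2 :=
    pow_le_pow_left₀ (norm_nonneg _) h 2
  rw [h1, mul_pow] at h4
  rw [h2, h3] at h4
  rwa [← Complex.sq_norm]

lemma cs_key' (x y : Fin T → ℂ) (hx : ∑ i, ‖x i‖ ^ 2 = 1) (hy : ∑ i, ‖y i‖ ^ 2 = 1) :
    Complex.normSq (star x ⬝ᵥ y) ≤ 1 := by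
  have := cs_key x y
  rwa [hx, hy, one_mul] at this

lemma inv_key (b c : Fin T → ℂ) (hbb : star b ⬝ᵥ b = 1) (hcc : star c ⬝ᵥ c = 1)
    (r s : ℂ) (β : ℂ) (hβ : star b ⬝ᵥ c = β) (hβ' : star c ⬝ᵥ b = (starRingEnd ℂ) β) :
    (1 + r • vecMulVec b (star b) + s • vecMulVec c (star c)) *
      (((1+r)*(1+s) - r*s*(β * (starRingEnd ℂ) β)) • 1 +
        (-(r*(1+s))) • vecMulVec b (star b) + (-(s*(1+r))) • vecMulVec c (star c) +
        (r*s*β) • vecMulVec b (star c) + (r*s*(starRingEnd ℂ) β) • vecMulVec c (star b)) =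
      ((1+r)*(1+s) - r*s*(β * (starRingEnd ℂ) β)) • 1 := by
  simp only [Matrix.add_mul, Matrix.mul_add, smul_mul_assoc, mul_smul_comm,
    one_mul, mul_one, vmv_mul, hbb, hcc, hβ, hβ', smul_smul, one_smul]
  module

lemma val_eq (a b c : Fin T → ℂ) (haa : star a ⬝ᵥ a = 1) (hbb : star b ⬝ᵥ b = 1)
    (hcc : star c ⬝ᵥ c = 1) (ρ s : ℝ)
    (hΔ : 0 < (1+ρ)*(1+s) - ρ*s*Complex.normSq (star b ⬝ᵥ c)) :
    (dotProduct (star a)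
      ((1 + ((ρ : ℂ) • Matrix.vecMulVec b (star b)) +
          (((s : ℝ) : ℂ) • Matrix.vecMulVec c (star c)))⁻¹ *ᵥ a)).re
    = ((1+ρ)*(1+s) - ρ*s*Complex.normSq (star b ⬝ᵥ c)
        - ρ*(1+s)*Complex.normSq (star a ⬝ᵥ b) - s*(1+ρ)*Complex.normSq (star a ⬝ᵥ c)
        + 2*ρ*s*((star a ⬝ᵥ b)*(star b ⬝ᵥ c)*(starRingEnd ℂ) (star a ⬝ᵥ c)).re)
      / ((1+ρ)*(1+s) - ρ*s*Complex.normSq (star b ⬝ᵥ c)) := by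
  set α : ℂ := star a ⬝ᵥ b with hα
  set β : ℂ := star b ⬝ᵥ c with hβ
  set γ : ℂ := star a ⬝ᵥ c with hγ
  have hα' : star b ⬝ᵥ a = (starRingEnd ℂ) α := dot_conj a b
  have hβ' : star c ⬝ᵥ b = (starRingEnd ℂ) β := dot_conj b c
  have hγ' : star c ⬝ᵥ a = (starRingEnd ℂ) γ := dot_conj a c
  set Δc : ℂ := (1+(ρ:ℂ))*(1+(s:ℂ)) - (ρ:ℂ)*(s:ℂ)*(β * (starRingEnd ℂ) β) with hΔc
  have hcast : Δc = (((1+ρ)*(1+s) - ρ*s*Complex.normSq β : ℝ) : ℂ) := by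
    rw [hΔc, Complex.mul_conj]
    push_cast
    ring
  have hΔne : Δc ≠ 0 := by
    rw [hcast]
    exact_mod_cast hΔ.ne'
  set N₀ : Matrix (Fin T) (Fin T) ℂ :=
    Δc • 1 + (-((ρ:ℂ)*(1+(s:ℂ)))) • vecMulVec b (star b)
      + (-((s:ℂ)*(1+(ρ:ℂ)))) • vecMulVec c (star c)
      + ((ρ:ℂ)*(s:ℂ)*β) • vecMulVec b (star c)
      + ((ρ:ℂ)*(s:ℂ)*(starRingEnd ℂ) β) • vecMulVec c (star b) with hN₀
  have hM : (1 + ((ρ:ℂ) • vecMulVec b (star b)) + (((s:ℝ):ℂ) • vecMulVec c (star c))) * N₀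
      = Δc • 1 := inv_key b c hbb hcc (ρ:ℂ) (s:ℂ) β hβ.symm hβ'
  have hinv : (1 + ((ρ:ℂ) • vecMulVec b (star b)) + (((s:ℝ):ℂ) • vecMulVec c (star c)))⁻¹
      = Δc⁻¹ • N₀ := by
    apply Matrix.inv_eq_right_inv
    rw [Matrix.mul_smul, hM, smul_smul, inv_mul_cancel₀ hΔne, one_smul]
  rw [hinv]
  have hval : star a ⬝ᵥ ((Δc⁻¹ • N₀) *ᵥ a) = Δc⁻¹ *
      (Δc + (-((ρ:ℂ)*(1+(s:ℂ))))*((starRingEnd ℂ) α*α)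
        + (-((s:ℂ)*(1+(ρ:ℂ))))*((starRingEnd ℂ) γ*γ)
        + ((ρ:ℂ)*(s:ℂ)*β)*((starRingEnd ℂ) γ*α)
        + ((ρ:ℂ)*(s:ℂ)*(starRingEnd ℂ) β)*((starRingEnd ℂ) α*γ)) := by
    simp only [hN₀, Matrix.smul_mulVec, Matrix.add_mulVec, Matrix.one_mulVec,
      vmv_mulVec, dotProduct_smul, dotProduct_add, smul_eq_mul,
      Pi.smul_apply, hα', hβ', hγ', haa]
    ring
  rw [hval]
  have e1 : (starRingEnd ℂ) α * α = ((Complex.normSq α : ℝ) : ℂ) := by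
    rw [mul_comm, Complex.mul_conj]
  have e2 : (starRingEnd ℂ) γ * γ = ((Complex.normSq γ : ℝ) : ℂ) := by
    rw [mul_comm, Complex.mul_conj]
  have e4 : β * (starRingEnd ℂ) β = ((Complex.normSq β : ℝ) : ℂ) := Complex.mul_conj β
  have e3 := Complex.add_conj (α*β*(starRingEnd ℂ) γ)
  simp only [_root_.map_mul, Complex.conj_conj] at e3
  push_cast at e3
  have hnum : (Δc + (-((ρ:ℂ)*(1+(s:ℂ))))*((starRingEnd ℂ) α*α)
        + (-((s:ℂ)*(1+(ρ:ℂ))))*((starRingEnd ℂ) γ*γ)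
        + ((ρ:ℂ)*(s:ℂ)*β)*((starRingEnd ℂ) γ*α)
        + ((ρ:ℂ)*(s:ℂ)*(starRingEnd ℂ) β)*((starRingEnd ℂ) α*γ))
      = (((1+ρ)*(1+s) - ρ*s*Complex.normSq β
        - ρ*(1+s)*Complex.normSq α - s*(1+ρ)*Complex.normSq γ
        + 2*ρ*s*(α*β*(starRingEnd ℂ) γ).re : ℝ) : ℂ) := by
    rw [hΔc]
    push_cast
    linear_combination (-(ρ:ℂ)*(1+(s:ℂ)))*e1 + (-(s:ℂ)*(1+(ρ:ℂ)))*e2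
      + (-(ρ:ℂ)*(s:ℂ))*e4 + (ρ:ℂ)*(s:ℂ)*e3
  rw [hnum, hcast, ← Complex.ofReal_inv, ← Complex.ofReal_mul, Complex.ofReal_re,
    inv_mul_eq_div]
variable {T : ℕ}

lemma cs_re (x y : Fin T → ℂ)
    (hdx : star x ⬝ᵥ x = ((∑ i, ‖x i‖ ^ 2 : ℝ) : ℂ))
    (hdy : star y ⬝ᵥ y = ((∑ i, ‖y i‖ ^ 2 : ℝ) : ℂ))
    (hcs : Complex.normSq (star x ⬝ᵥ y) ≤ (∑ i, ‖x i‖ ^ 2) * (∑ i, ‖y i‖ ^ 2)) :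
    Complex.normSq (star x ⬝ᵥ y) ≤ (star x ⬝ᵥ x).re * (star y ⬝ᵥ y).re := by
  rw [hdx, hdy, Complex.ofReal_re, Complex.ofReal_re]
  exact hcs

lemma gram_aux (a b c : Fin T → ℂ) (haa : star a ⬝ᵥ a = 1) (hbb : star b ⬝ᵥ b = 1)
    (hcc : star c ⬝ᵥ c = 1)
    (key : ∀ x y : Fin T → ℂ,
      Complex.normSq (star x ⬝ᵥ y) ≤ (star x ⬝ᵥ x).re * (star y ⬝ᵥ y).re) :
    Complex.normSq ((star a ⬝ᵥ c) - (star a ⬝ᵥ b)*(star b ⬝ᵥ c)) ≤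
      (1 - Complex.normSq (star a ⬝ᵥ b)) * (1 - Complex.normSq (star b ⬝ᵥ c)) := by
  have hba : star b ⬝ᵥ a = (starRingEnd ℂ) (star a ⬝ᵥ b) := by
    simp [dotProduct, map_sum]; congr 1; ext k; ring
  set α : ℂ := star a ⬝ᵥ b with hα
  set β : ℂ := star b ⬝ᵥ c with hβ
  set γ : ℂ := star a ⬝ᵥ c with hγ
  have h := key (a - (starRingEnd ℂ) α • b) (c - β • b)
  have hxy : star (a - (starRingEnd ℂ) α • b) ⬝ᵥ (c - β • b) = γ - α * β := by
    simp only [star_sub, star_smul, sub_dotProduct, dotProduct_sub,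
      smul_dotProduct, dotProduct_smul, smul_eq_mul, Complex.star_def,
      Complex.conj_conj, hbb, ← hα, ← hβ, ← hγ]
    ring
  have hxx : star (a - (starRingEnd ℂ) α • b) ⬝ᵥ (a - (starRingEnd ℂ) α • b)
      = 1 - ((Complex.normSq α : ℝ) : ℂ) := by
    simp only [star_sub, star_smul, sub_dotProduct, dotProduct_sub,
      smul_dotProduct, dotProduct_smul, smul_eq_mul, Complex.star_def,
      Complex.conj_conj, hbb, haa, hba, ← hα]
    rw [← Complex.mul_conj α]
    ring
  have hyy : star (c - β • b) ⬝ᵥ (c - β • b) = 1 - ((Complex.normSq β : ℝ) : ℂ) := by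
    have hcb : star c ⬝ᵥ b = (starRingEnd ℂ) β := by
      rw [hβ]; simp [dotProduct, map_sum]; congr 1; ext k; ring
    simp only [star_sub, star_smul, sub_dotProduct, dotProduct_sub,
      smul_dotProduct, dotProduct_smul, smul_eq_mul, Complex.star_def,
      Complex.conj_conj, hbb, hcc, hcb, ← hβ]
    rw [← Complex.mul_conj β]
    ring
  rw [hxy, hxx, hyy] at h
  simpa using h

lemma delta_pos (ρ Bq s : ℝ) (hρ : 0 < ρ) (hB0 : 0 ≤ Bq) (hB : Bq ≤ 1) (hs : 0 ≤ s) :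
    0 < (1+ρ)*(1+s) - ρ*s*Bq := by nlinarith [mul_nonneg (mul_nonneg hρ.le hs) (sub_nonneg.2 hB)]

lemma core_le (ρ Aq Bq Gq R s₁ s₂ : ℝ) (hρ : 0 < ρ)
    (hA0 : 0 ≤ Aq) (hA : Aq ≤ 1) (hB0 : 0 ≤ Bq) (hB : Bq ≤ 1)
    (hpe : 0 ≤ (1+ρ)^2*Gq - 2*ρ*(1+ρ)*R + ρ^2*Aq*Bq)
    (hs₁ : 0 ≤ s₁) (h12 : s₁ ≤ s₂) :
    ((1+ρ)*(1+s₂) - ρ*s₂*Bq - ρ*(1+s₂)*Aq - s₂*(1+ρ)*Gq + 2*ρ*s₂*R)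
      / ((1+ρ)*(1+s₂) - ρ*s₂*Bq)
    ≤ ((1+ρ)*(1+s₁) - ρ*s₁*Bq - ρ*(1+s₁)*Aq - s₁*(1+ρ)*Gq + 2*ρ*s₁*R)
      / ((1+ρ)*(1+s₁) - ρ*s₁*Bq) := by
  have hs₂ : 0 ≤ s₂ := le_trans hs₁ h12
  have hd₁ := delta_pos ρ Bq s₁ hρ hB0 hB hs₁
  have hd₂ := delta_pos ρ Bq s₂ hρ hB0 hB hs₂
  rw [div_le_div_iff₀ hd₂ hd₁]
  nlinarith [mul_nonneg hpe (sub_nonneg.2 h12)]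

lemma core_lt (ρ Aq Bq Gq R s₁ s₂ : ℝ) (hρ : 0 < ρ)
    (hA0 : 0 ≤ Aq) (hA : Aq ≤ 1) (hB0 : 0 ≤ Bq) (hB : Bq ≤ 1)
    (hG0 : 0 ≤ Gq) (hG : Gq ≤ 1)
    (hS : 0 ≤ 1 - Aq - Bq - Gq + 2*R)
    (hs₁ : 0 ≤ s₁) (h12 : s₁ < s₂) :
    s₁ * (((1+ρ)*(1+s₁) - ρ*s₁*Bq - ρ*(1+s₁)*Aq - s₁*(1+ρ)*Gq + 2*ρ*s₁*R)
      / ((1+ρ)*(1+s₁) - ρ*s₁*Bq))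
    < s₂ * (((1+ρ)*(1+s₂) - ρ*s₂*Bq - ρ*(1+s₂)*Aq - s₂*(1+ρ)*Gq + 2*ρ*s₂*R)
      / ((1+ρ)*(1+s₂) - ρ*s₂*Bq)) := by
  have hs₂ : 0 ≤ s₂ := le_trans hs₁ h12.le
  have hd₁ := delta_pos ρ Bq s₁ hρ hB0 hB hs₁
  have hd₂ := delta_pos ρ Bq s₂ hρ hB0 hB hs₂
  rw [← mul_div_assoc, ← mul_div_assoc, div_lt_div_iff₀ hd₁ hd₂]
  set p : ℝ := 1 + ρ - ρ*Aq with hp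
  set q : ℝ := (1+ρ) - ρ*Bq - ρ*Aq - (1+ρ)*Gq + 2*ρ*R with hq
  set e : ℝ := 1 + ρ - ρ*Bq with he
  have hppos : 0 < p := by rw [hp]; nlinarith
  have hqnn : 0 ≤ q := by rw [hq]; nlinarith
  have hepos : 0 < e := by rw [he]; nlinarith
  have key : s₂ * ((1+ρ)*(1+s₂) - ρ*s₂*Bq - ρ*(1+s₂)*Aq - s₂*(1+ρ)*Gq + 2*ρ*s₂*R)
        * ((1+ρ)*(1+s₁) - ρ*s₁*Bq)
      - s₁ * ((1+ρ)*(1+s₁) - ρ*s₁*Bq - ρ*(1+s₁)*Aq - s₁*(1+ρ)*Gq + 2*ρ*s₁*R)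
        * ((1+ρ)*(1+s₂) - ρ*s₂*Bq)
      = (s₂ - s₁) * (p*(1+ρ)) + (s₂ - s₁) * (q*(1+ρ)*(s₁+s₂))
        + (s₂ - s₁) * (q*e*(s₁*s₂)) := by
    rw [hp, hq, he]; ring
  have t1 : 0 < (s₂ - s₁) * (p*(1+ρ)) :=
    mul_pos (by linarith) (by nlinarith)
  have t2 : 0 ≤ (s₂ - s₁) * (q*(1+ρ)*(s₁+s₂)) := by
    apply mul_nonneg (by linarith)
    apply mul_nonneg (mul_nonneg hqnn (by linarith)) (by linarith)
  have t3 : 0 ≤ (s₂ - s₁) * (q*e*(s₁*s₂)) := by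
    apply mul_nonneg (by linarith)
    exact mul_nonneg (mul_nonneg hqnn hepos.le) (mul_nonneg hs₁ hs₂)
  linarith [key, t1, t2, t3]

lemma conj_re_trick (α β γ : ℂ) :
    (γ * (starRingEnd ℂ) (α*β)).re = (α*β*(starRingEnd ℂ) γ).re := by
  rw [show α*β*(starRingEnd ℂ) γ = (starRingEnd ℂ) (γ * (starRingEnd ℂ) (α*β)) by
    simp [_root_.map_mul]; ring]
  rw [Complex.conj_re]

lemma S_nonneg (α β γ : ℂ)
    (hg : Complex.normSq (γ - α*β) ≤ (1 - normSq α) * (1 - normSq β)) :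
    0 ≤ 1 - normSq α - normSq β - normSq γ + 2*(α*β*(starRingEnd ℂ) γ).re := by
  rw [Complex.normSq_sub, Complex.normSq_mul, conj_re_trick] at hg
  nlinarith [Complex.normSq_nonneg α, Complex.normSq_nonneg β]

lemma pe_nonneg (α β γ : ℂ) (ρ : ℝ) :
    0 ≤ (1+ρ)^2 * normSq γ - 2*ρ*(1+ρ)*(α*β*(starRingEnd ℂ) γ).re
      + ρ^2 * normSq α * normSq β := by
  have h := Complex.normSq_nonneg (((1+ρ : ℝ) : ℂ)*γ - ((ρ : ℝ) : ℂ)*(α*β))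
  rw [Complex.normSq_sub, Complex.normSq_mul, Complex.normSq_mul, Complex.normSq_ofReal,
    Complex.normSq_ofReal, Complex.normSq_mul] at h
  have e0 : ((((1+ρ : ℝ) : ℂ)*γ) * (starRingEnd ℂ) (((ρ : ℝ) : ℂ)*(α*β)))
      = ((((1+ρ)*ρ : ℝ)) : ℂ) * (γ * (starRingEnd ℂ) (α*β)) := by
    rw [_root_.map_mul, Complex.conj_ofReal]; push_cast; ring
  rw [e0, Complex.re_ofReal_mul, conj_re_trick] at h
  nlinarith [h]

theorem stmt_18 {T : ℕ} (a b c : Fin T → ℂ)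
    (ha : ∑ i, ‖a i‖ ^ 2 = 1) (hb : ∑ i, ‖b i‖ ^ 2 = 1) (hc : ∑ i, ‖c i‖ ^ 2 = 1)
    (hab : a ≠ b) (hbc : b ≠ c) (hac : a ≠ c) (ρ : ℝ) (hρ : 0 < ρ) :
    AntitoneOn
      (fun θ : ℝ => ρ *
        (dotProduct (star a)
          ((1 + ((ρ : ℂ) • Matrix.vecMulVec b (star b)) +
              (((ρ * θ : ℝ) : ℂ) • Matrix.vecMulVec c (star c)))⁻¹ *ᵥ a)).re)
      (Set.Ici 0) ∧
    StrictMonoOn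
      (fun θ : ℝ => ρ * θ *
        (dotProduct (star a)
          ((1 + ((ρ : ℂ) • Matrix.vecMulVec b (star b)) +
              (((ρ * θ : ℝ) : ℂ) • Matrix.vecMulVec c (star c)))⁻¹ *ᵥ a)).re)
      (Set.Ici 0) := by
  have haa : star a ⬝ᵥ a = 1 := by rw [dot_self_re, ha]; norm_num
  have hbb : star b ⬝ᵥ b = 1 := by rw [dot_self_re, hb]; norm_num
  have hcc : star c ⬝ᵥ c = 1 := by rw [dot_self_re, hc]; norm_num
  have hA : Complex.normSq (star a ⬝ᵥ b) ≤ 1 := cs_key' a b ha hb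
  have hB : Complex.normSq (star b ⬝ᵥ c) ≤ 1 := cs_key' b c hb hc
  have hG : Complex.normSq (star a ⬝ᵥ c) ≤ 1 := cs_key' a c ha hc
  have hA0 := Complex.normSq_nonneg (star a ⬝ᵥ b)
  have hB0 := Complex.normSq_nonneg (star b ⬝ᵥ c)
  have hG0 := Complex.normSq_nonneg (star a ⬝ᵥ c)
  have hgram := gram_aux a b c haa hbb hcc
    (fun x y => cs_re x y (dot_self_re x) (dot_self_re y) (cs_key x y))
  have hS := S_nonneg (star a ⬝ᵥ b) (star b ⬝ᵥ c) (star a ⬝ᵥ c) hgram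
  have hpe := pe_nonneg (star a ⬝ᵥ b) (star b ⬝ᵥ c) (star a ⬝ᵥ c) ρ
  constructor
  · intro θ₁ hθ₁ θ₂ hθ₂ h12
    have hs₁ : (0:ℝ) ≤ ρ * θ₁ := mul_nonneg hρ.le hθ₁
    have hs₂ : (0:ℝ) ≤ ρ * θ₂ := mul_nonneg hρ.le hθ₂
    simp only
    rw [val_eq a b c haa hbb hcc ρ (ρ * θ₁)
        (delta_pos ρ _ (ρ * θ₁) hρ hB0 hB hs₁),
      val_eq a b c haa hbb hcc ρ (ρ * θ₂)
        (delta_pos ρ _ (ρ * θ₂) hρ hB0 hB hs₂)]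
    exact mul_le_mul_of_nonneg_left
      (core_le ρ _ _ _ _ (ρ * θ₁) (ρ * θ₂) hρ hA0 hA hB0 hB hpe hs₁
        (by nlinarith)) hρ.le
  · intro θ₁ hθ₁ θ₂ hθ₂ h12
    have hs₁ : (0:ℝ) ≤ ρ * θ₁ := mul_nonneg hρ.le hθ₁
    have hs₂ : (0:ℝ) ≤ ρ * θ₂ := mul_nonneg hρ.le hθ₂
    simp only
    rw [val_eq a b c haa hbb hcc ρ (ρ * θ₁)
        (delta_pos ρ _ (ρ * θ₁) hρ hB0 hB hs₁),
      val_eq a b c haa hbb hcc ρ (ρ * θ₂)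
        (delta_pos ρ _ (ρ * θ₂) hρ hB0 hB hs₂)]
    exact core_lt ρ _ _ _ _ (ρ * θ₁) (ρ * θ₂) hρ hA0 hA hB0 hB hG0 hG hS hs₁
      (by nlinarith)
end
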